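/- Let n ≥ 1, 0 < p < ∞ and δ > 0, let X be a Banach space, and let a = (a_j)_{j∈ℤ} ⊂ ℝ and b = (b_j)_{j∈ℤ} ⊂ (0,∞) satisfy A := ∑_{j∈ℤ} 2^{δ|j|} |a_j| b_j^{-1/p} < ∞. Then there is a constant C = C(p, δ) > 0, independent of n, X, a, b, such that for every strongly measurable f : ℝ^n → X with ∫_{{x_n > 0}} ‖f(x)‖_X^p dx < ∞, the series ∑_{j∈ℤ} a_j f(x', -b_j x_n) converges absolutely in X for almost every x = (x', x_n) with x_n < 0, and (∫_{{x_n < 0}} ‖∑_{j∈ℤ} a_j f(x', -b_j x_n)‖_X^p dx)^{1/p} ≤ C · A · (∫_{{x_n > 0}} ‖f(x)‖_X^p dx)^{1/p}. -/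

import Mathlib

open MeasureTheory ENNReal Set

lemma aux_tsum_rpow_le {u : ℤ → ℝ≥0∞} {q : ℝ} (hq : 1 ≤ q) :
    ∑' i, u i ^ q ≤ (∑' i, u i) ^ q := by
  rw [ENNReal.tsum_eq_iSup_sum (f := fun i => u i ^ q)]
  refine iSup_le fun s => ?_
  calc ∑ i ∈ s, u i ^ q ≤ (∑ i ∈ s, u i) ^ q := by
        classical
        induction s using Finset.induction_on with
        | empty => simp [ENNReal.zero_rpow_of_pos (lt_of_lt_of_le zero_lt_one hq)]
        | insert _ _ h ih =>
            rw [Finset.sum_insert h, Finset.sum_insert h]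
            exact le_trans (add_le_add_right ih _) (ENNReal.add_rpow_le_rpow_add _ _ hq)
    _ ≤ ((∑' i, u i)) ^ q := ENNReal.rpow_le_rpow (ENNReal.sum_le_tsum s) (le_trans zero_le_one hq)

lemma aux_rpow_tsum_le {u : ℤ → ℝ≥0∞} {p : ℝ} (hp : 0 < p) (hp1 : p ≤ 1) :
    (∑' i, u i) ^ p ≤ ∑' i, u i ^ p := by
  have h := aux_tsum_rpow_le (u := fun i => u i ^ p) (q := 1 / p)
    (by rw [le_div_iff₀ hp]; linarith)
  simp only [← ENNReal.rpow_mul, mul_one_div_cancel hp.ne', ENNReal.rpow_one] at h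
  have h2 := ENNReal.rpow_le_rpow h hp.le
  rwa [← ENNReal.rpow_mul, one_div_mul_cancel hp.ne', ENNReal.rpow_one] at h2

lemma aux_holder {u v : ℤ → ℝ≥0∞} {p q : ℝ} (hpq : p.HolderConjugate q) :
    ∑' i, u i * v i ≤ (∑' i, u i ^ p) ^ (1 / p) * (∑' i, v i ^ q) ^ (1 / q) := by
  have h := ENNReal.lintegral_mul_le_Lp_mul_Lq (μ := Measure.count (α := ℤ)) hpq
    (f := u) (g := v) (Measurable.of_discrete.aemeasurable) (Measurable.of_discrete.aemeasurable)
  simpa [MeasureTheory.lintegral_count] using h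

lemma aux_summable {c : ℝ} (hc : 0 < c) :
    Summable (fun j : ℤ => (2:ℝ) ^ (-c * |(j:ℝ)|)) := by
  have hr0 : (0:ℝ) ≤ (2:ℝ) ^ (-c) := Real.rpow_nonneg (by norm_num) _
  have hr1 : (2:ℝ) ^ (-c) < 1 :=
    Real.rpow_lt_one_of_one_lt_of_neg (by norm_num) (by linarith)
  have key : ∀ j : ℤ, (2:ℝ) ^ (-c * |(j:ℝ)|) = ((2:ℝ) ^ (-c)) ^ (j.natAbs) := by
    intro j
    rw [← Real.rpow_natCast ((2:ℝ) ^ (-c)) j.natAbs, ← Real.rpow_mul (by norm_num)]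
    congr 1
    rw [Nat.cast_natAbs]
    push_cast
    rfl
  simp only [key]
  apply Summable.of_nat_of_neg
  · simpa using summable_geometric_of_lt_one hr0 hr1
  · simpa using summable_geometric_of_lt_one hr0 hr1

lemma aux_core (p δ : ℝ) (hp : 0 < p) (hδ : 0 < δ) :
    ∃ C : ℝ, 0 < C ∧
      ∀ (α : Type) (_ : MeasurableSpace α) (μ : Measure α)
        (n : ℤ → α → ℝ≥0∞) (_ : ∀ j, Measurable (n j))
        (τ : ℤ → ℝ≥0∞) (F : ℝ≥0∞) (A : ℝ) (_ : 0 ≤ A)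
        (_ : ∀ j, ∫⁻ x, n j x ^ p ∂μ = τ j ^ p * F)
        (_ : ∀ j, τ j ≤ ENNReal.ofReal ((2:ℝ) ^ (-δ * |(j:ℝ)|) * A)),
        ∫⁻ x, (∑' j, n j x) ^ p ∂μ ≤ (ENNReal.ofReal C) ^ p * ((ENNReal.ofReal A) ^ p * F) := by
  by_cases hp1 : p ≤ 1
  · -- C = g^(1/p) with g = ∑ 2^(-pδ|j|)
    set g : ℝ := ∑' j : ℤ, (2:ℝ) ^ (-(p * δ) * |(j:ℝ)|) with hg_def
    have hg_sum : Summable (fun j : ℤ => (2:ℝ) ^ (-(p * δ) * |(j:ℝ)|)) :=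
      aux_summable (by positivity)
    have hg_pos : 0 < g := Summable.tsum_pos hg_sum (fun j => (Real.rpow_pos_of_pos two_pos _).le) 0
      (by positivity)
    refine ⟨g ^ (1 / p), Real.rpow_pos_of_pos hg_pos _, ?_⟩
    intro α mα μ n hn τ F A hA hI hτ
    have hCp : (ENNReal.ofReal (g ^ (1 / p))) ^ p = ENNReal.ofReal g := by
      rw [ENNReal.ofReal_rpow_of_nonneg (Real.rpow_nonneg hg_pos.le _) hp.le,
        ← Real.rpow_mul hg_pos.le, one_div_mul_cancel hp.ne', Real.rpow_one]
    calc ∫⁻ x, (∑' j, n j x) ^ p ∂μ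
        ≤ ∫⁻ x, ∑' j, n j x ^ p ∂μ :=
          lintegral_mono fun x => aux_rpow_tsum_le hp hp1
      _ = ∑' j, ∫⁻ x, n j x ^ p ∂μ :=
          lintegral_tsum fun j => ((hn j).pow_const p).aemeasurable
      _ = (∑' j, τ j ^ p) * F := by simp only [hI]; rw [ENNReal.tsum_mul_right]
      _ ≤ (∑' j : ℤ, ENNReal.ofReal ((2:ℝ) ^ (-(p*δ) * |(j:ℝ)|)) * (ENNReal.ofReal A) ^ p) * F := by
          gcongr with j
          calc τ j ^ p ≤ (ENNReal.ofReal ((2:ℝ) ^ (-δ * |(j:ℝ)|) * A)) ^ p :=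
                ENNReal.rpow_le_rpow (hτ j) hp.le
            _ = ENNReal.ofReal ((2:ℝ) ^ (-(p*δ) * |(j:ℝ)|)) * (ENNReal.ofReal A) ^ p := by
                rw [ENNReal.ofReal_mul (Real.rpow_nonneg (by norm_num) _),
                  ENNReal.mul_rpow_of_nonneg _ _ hp.le,
                  ENNReal.ofReal_rpow_of_nonneg (Real.rpow_nonneg (by norm_num) _) hp.le,
                  ← Real.rpow_mul (by norm_num : (0:ℝ) ≤ 2),
                  (by ring : -δ * |(j:ℝ)| * p = -(p*δ) * |(j:ℝ)|)]
      _ = (ENNReal.ofReal (g ^ (1/p))) ^ p * ((ENNReal.ofReal A) ^ p * F) := by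
          rw [ENNReal.tsum_mul_right, hCp,
            ← ENNReal.ofReal_tsum_of_nonneg (fun j => Real.rpow_nonneg (by norm_num) _) hg_sum]
          ring
  · -- p > 1 : Hölder with weights
    have hp1' : 1 < p := not_le.1 hp1
    set w : ℝ := ∑' j : ℤ, (2:ℝ) ^ (-δ * |(j:ℝ)|) with hw_def
    have hw_sum : Summable (fun j : ℤ => (2:ℝ) ^ (-δ * |(j:ℝ)|)) := aux_summable hδ
    have hw_pos : 0 < w := Summable.tsum_pos hw_sum (fun j => (Real.rpow_pos_of_pos two_pos _).le) 0
      (by positivity)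
    refine ⟨w, hw_pos, ?_⟩
    intro α mα μ n hn τ F A hA hI hτ
    set q : ℝ := p.conjExponent with hq_def
    have hpq : p.HolderConjugate q := Real.HolderConjugate.conjExponent hp1'
    have hq0 : q ≠ 0 := hpq.symm.ne_zero
    have hdq : p / q = p - 1 := hpq.div_conj_eq_sub_one
    set wj : ℤ → ℝ≥0∞ := fun j => ENNReal.ofReal ((2:ℝ) ^ (-δ * |(j:ℝ)|)) with hwj_def
    have hwj_pos : ∀ j : ℤ, (0:ℝ) < (2:ℝ) ^ (-δ * |(j:ℝ)|) := fun j => Real.rpow_pos_of_pos two_pos _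
    have hwj_ne0 : ∀ j, wj j ≠ 0 := fun j => (ENNReal.ofReal_pos.mpr (hwj_pos j)).ne'
    have hwj_net : ∀ j, wj j ≠ ⊤ := fun j => ENNReal.ofReal_ne_top
    have hW : ∑' j, wj j = ENNReal.ofReal w := by
      rw [hw_def, ENNReal.ofReal_tsum_of_nonneg (fun j => (hwj_pos j).le) hw_sum]
    have hW_ne0 : ENNReal.ofReal w ≠ 0 := (ENNReal.ofReal_pos.mpr hw_pos).ne'
    -- pointwise Hölder
    have hpoint : ∀ x, (∑' j, n j x) ^ p
        ≤ (ENNReal.ofReal w) ^ (p/q) * ∑' j, (wj j) ^ (-(p/q)) * n j x ^ p := by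
      intro x
      have h1 : ∀ j, n j x = (wj j) ^ (1/q) * ((wj j) ^ (-(1/q)) * n j x) := by
        intro j
        rw [← mul_assoc, ← ENNReal.rpow_add _ _ (hwj_ne0 j) (hwj_net j)]
        simp
      have step2 := aux_holder (u := fun j => (wj j) ^ (1/q))
        (v := fun j => (wj j) ^ (-(1/q)) * n j x) hpq.symm
      have e1 : ∀ j : ℤ, ((wj j) ^ (1/q)) ^ q = wj j := by
        intro j; rw [← ENNReal.rpow_mul, one_div_mul_cancel hq0, ENNReal.rpow_one]
      have e2 : ∀ j : ℤ, ((wj j) ^ (-(1/q)) * n j x) ^ p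
          = (wj j) ^ (-(p/q)) * n j x ^ p := by
        intro j
        rw [ENNReal.mul_rpow_of_nonneg _ _ hp.le, ← ENNReal.rpow_mul,
          (by ring : -(1/q) * p = -(p/q))]
      simp only [e1, e2] at step2
      calc (∑' j, n j x) ^ p
          = (∑' j, (wj j) ^ (1/q) * ((wj j) ^ (-(1/q)) * n j x)) ^ p := by
            rw [tsum_congr h1]
        _ ≤ ((∑' j, wj j) ^ (1/q) * (∑' j, (wj j) ^ (-(p/q)) * n j x ^ p) ^ (1/p)) ^ p :=
            ENNReal.rpow_le_rpow step2 hp.le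
        _ = (ENNReal.ofReal w) ^ (p/q) * ∑' j, (wj j) ^ (-(p/q)) * n j x ^ p := by
            rw [hW, ENNReal.mul_rpow_of_nonneg _ _ hp.le, ← ENNReal.rpow_mul,
              ← ENNReal.rpow_mul, one_div_mul_cancel hp.ne', ENNReal.rpow_one,
              (by ring : 1/q * p = p/q)]
    have hWconst_ne : (ENNReal.ofReal w) ^ (p/q) ≠ ⊤ :=
      ENNReal.rpow_ne_top_of_nonneg (by rw [hdq]; linarith) ENNReal.ofReal_ne_top
    have hwjconst_ne : ∀ j, (wj j) ^ (-(p/q)) ≠ ⊤ := by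
      intro j
      rw [hwj_def, ENNReal.ofReal_rpow_of_pos (hwj_pos j)]
      exact ENNReal.ofReal_ne_top
    calc ∫⁻ x, (∑' j, n j x) ^ p ∂μ
        ≤ ∫⁻ x, (ENNReal.ofReal w) ^ (p/q) * ∑' j, (wj j) ^ (-(p/q)) * n j x ^ p ∂μ :=
          lintegral_mono hpoint
      _ = (ENNReal.ofReal w) ^ (p/q) * ∑' j, (wj j) ^ (-(p/q)) * ∫⁻ x, n j x ^ p ∂μ := by
          rw [lintegral_const_mul' _ _ hWconst_ne]
          congr 1
          rw [lintegral_tsum fun j =>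
            ((((hn j).pow_const p).const_mul _)).aemeasurable]
          exact tsum_congr fun j => lintegral_const_mul' _ _ (hwjconst_ne j)
      _ ≤ (ENNReal.ofReal w) ^ (p/q) * ∑' j, wj j * ((ENNReal.ofReal A) ^ p * F) := by
          refine mul_le_mul_right (ENNReal.tsum_le_tsum fun j => ?_) _
          rw [hI j]
          have hτ' : τ j ^ p ≤ (wj j * ENNReal.ofReal A) ^ p := by
            refine ENNReal.rpow_le_rpow ?_ hp.le
            calc τ j ≤ ENNReal.ofReal ((2:ℝ) ^ (-δ * |(j:ℝ)|) * A) := hτ j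
              _ = wj j * ENNReal.ofReal A := ENNReal.ofReal_mul (hwj_pos j).le
          calc (wj j) ^ (-(p/q)) * (τ j ^ p * F)
              ≤ (wj j) ^ (-(p/q)) * ((wj j * ENNReal.ofReal A) ^ p * F) :=
                mul_le_mul_right (mul_le_mul_left hτ' F) _
            _ = wj j * ((ENNReal.ofReal A) ^ p * F) := by
                rw [ENNReal.mul_rpow_of_nonneg _ _ hp.le, ← mul_assoc, ← mul_assoc,
                  ← ENNReal.rpow_add _ _ (hwj_ne0 j) (hwj_net j),
                  (by rw [hdq]; ring : -(p/q) + p = 1), ENNReal.rpow_one, mul_assoc]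
      _ = (ENNReal.ofReal w) ^ p * ((ENNReal.ofReal A) ^ p * F) := by
          rw [ENNReal.tsum_mul_right, hW, ← mul_assoc]
          congr 1
          calc (ENNReal.ofReal w) ^ (p/q) * ENNReal.ofReal w
              = (ENNReal.ofReal w) ^ (p/q) * (ENNReal.ofReal w) ^ (1:ℝ) := by
                rw [ENNReal.rpow_one]
            _ = (ENNReal.ofReal w) ^ (p/q + 1) :=
                (ENNReal.rpow_add _ _ hW_ne0 ENNReal.ofReal_ne_top).symm
            _ = (ENNReal.ofReal w) ^ p := by
                congr 1
                rw [hdq]; ring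


lemma aux_scale1 {c : ℝ} (hc : 0 < c) (g : ℝ → ℝ≥0∞) (hg : Measurable g) :
    ∫⁻ t in Set.Iio (0:ℝ), g (-c * t) = (ENNReal.ofReal c)⁻¹ * ∫⁻ s in Set.Ioi (0:ℝ), g s := by
  have hφ : Measurable fun t : ℝ => -c * t := (measurable_id.const_mul (-c))
  have hne : (-c : ℝ) ≠ 0 := by linarith
  have hpre : ((-c) * ·) ⁻¹' (Set.Ioi (0:ℝ)) = Set.Iio 0 := by
    ext t
    simp only [Set.mem_preimage, Set.mem_Ioi, Set.mem_Iio]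
    constructor <;> intro h <;> nlinarith
  calc ∫⁻ t in Set.Iio (0:ℝ), g (-c * t)
      = ∫⁻ s, g s ∂(Measure.map ((-c) * ·) (volume.restrict (Set.Iio 0))) := by
        rw [lintegral_map hg hφ]
    _ = ∫⁻ s, g s ∂((Measure.map ((-c) * ·) volume).restrict (Set.Ioi 0)) := by
        rw [Measure.restrict_map hφ measurableSet_Ioi, hpre]
    _ = (ENNReal.ofReal c)⁻¹ * ∫⁻ s in Set.Ioi (0:ℝ), g s := by
        rw [Real.map_volume_mul_left hne, Measure.restrict_smul, lintegral_smul_measure,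
          abs_inv, abs_neg, abs_of_pos hc, ENNReal.ofReal_inv_of_pos hc, smul_eq_mul]

lemma aux_scaleP {m : ℕ} {c : ℝ} (hc : 0 < c) (H : (Fin m → ℝ) × ℝ → ℝ≥0∞)
    (hH : Measurable H) :
    ∫⁻ x in {x : (Fin m → ℝ) × ℝ | x.2 < 0}, H (x.1, -c * x.2)
      = (ENNReal.ofReal c)⁻¹ * ∫⁻ x in {x : (Fin m → ℝ) × ℝ | 0 < x.2}, H x := by
  have hneg : {x : (Fin m → ℝ) × ℝ | x.2 < 0} = (Set.univ : Set (Fin m → ℝ)) ×ˢ Set.Iio 0 := by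
    ext x; simp [Set.mem_prod]
  have hpos : {x : (Fin m → ℝ) × ℝ | 0 < x.2} = (Set.univ : Set (Fin m → ℝ)) ×ˢ Set.Ioi 0 := by
    ext x; simp [Set.mem_prod]
  have hφ : Measurable fun x : (Fin m → ℝ) × ℝ => (x.1, -c * x.2) :=
    measurable_fst.prodMk (measurable_snd.const_mul (-c))
  rw [hneg, hpos, Measure.volume_eq_prod, ← Measure.prod_restrict, ← Measure.prod_restrict,
    Measure.restrict_univ]
  have hcomp : AEMeasurable (fun x : (Fin m → ℝ) × ℝ => H (x.1, -c * x.2))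
      (Measure.prod volume (volume.restrict (Set.Iio 0))) := (hH.comp hφ).aemeasurable
  rw [MeasureTheory.lintegral_prod _ hcomp, MeasureTheory.lintegral_prod _ hH.aemeasurable]
  have : ∀ x' : Fin m → ℝ, ∫⁻ t in Set.Iio (0:ℝ), H (x', -c * t)
      = (ENNReal.ofReal c)⁻¹ * ∫⁻ s in Set.Ioi (0:ℝ), H (x', s) := fun x' =>
    aux_scale1 hc (fun s => H (x', s)) (hH.comp (measurable_prodMk_left))
  simp only [this]
  rw [lintegral_const_mul' _ _ (by simp [hc])]


theorem statement13 (p δ : ℝ) (hp : 0 < p) (hδ : 0 < δ) :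
    ∃ C : ℝ, 0 < C ∧
      ∀ (m : ℕ) (X : Type) [NormedAddCommGroup X] [NormedSpace ℝ X] [CompleteSpace X],
        ∀ (a b : ℤ → ℝ), (∀ j, 0 < b j) →
        Summable (fun j : ℤ => (2 : ℝ) ^ (δ * |(j : ℝ)|) * |a j| * b j ^ (-1 / p)) →
        ∀ f : (Fin m → ℝ) × ℝ → X, StronglyMeasurable f →
          (∫⁻ x in {x : (Fin m → ℝ) × ℝ | 0 < x.2}, ENNReal.ofReal (‖f x‖ ^ p)) < ⊤ →
          (∀ᵐ x : (Fin m → ℝ) × ℝ, x.2 < 0 →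
            Summable (fun j : ℤ => ‖a j • f (x.1, -(b j) * x.2)‖)) ∧
          (∫⁻ x in {x : (Fin m → ℝ) × ℝ | x.2 < 0},
              ENNReal.ofReal (‖∑' j : ℤ, a j • f (x.1, -(b j) * x.2)‖ ^ p)) ^ (1 / p) ≤
            ENNReal.ofReal
              (C * ∑' j : ℤ, (2 : ℝ) ^ (δ * |(j : ℝ)|) * |a j| * b j ^ (-1 / p)) *
            (∫⁻ x in {x : (Fin m → ℝ) × ℝ | 0 < x.2}, ENNReal.ofReal (‖f x‖ ^ p)) ^ (1 / p) := by
  obtain ⟨C, hC, hcore⟩ := aux_core p δ hp hδ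
  refine ⟨C, hC, ?_⟩
  intro m X _ _ _ a b hb hsum f hf hfin
  set A : ℝ := ∑' j : ℤ, (2 : ℝ) ^ (δ * |(j : ℝ)|) * |a j| * b j ^ (-1 / p) with hA_def
  have hterm_nonneg : ∀ j : ℤ, 0 ≤ (2 : ℝ) ^ (δ * |(j : ℝ)|) * |a j| * b j ^ (-1 / p) :=
    fun j => mul_nonneg (mul_nonneg (Real.rpow_nonneg (by norm_num) _) (abs_nonneg _))
      (Real.rpow_nonneg (hb j).le _)
  have hA0 : 0 ≤ A := tsum_nonneg hterm_nonneg
  set μ := (volume : Measure ((Fin m → ℝ) × ℝ)).restrict {x : (Fin m → ℝ) × ℝ | x.2 < 0} with hμ_def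
  set n : ℤ → ((Fin m → ℝ) × ℝ) → ℝ≥0∞ :=
    fun j x => (‖a j • f (x.1, -(b j) * x.2)‖₊ : ℝ≥0∞) with hn_def
  have hφ : ∀ j : ℤ, Measurable fun x : (Fin m → ℝ) × ℝ => (x.1, -(b j) * x.2) :=
    fun j => measurable_fst.prodMk (measurable_snd.const_mul (-(b j)))
  have hn : ∀ j, Measurable (n j) :=
    fun j => ((hf.const_smul (a j)).comp_measurable (hφ j)).enorm
  set F : ℝ≥0∞ := ∫⁻ x in {x : (Fin m → ℝ) × ℝ | 0 < x.2}, ENNReal.ofReal (‖f x‖ ^ p)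
    with hF_def
  have hF_eq : F = ∫⁻ x in {x : (Fin m → ℝ) × ℝ | 0 < x.2}, ((‖f x‖₊ : ℝ≥0∞)) ^ p := by
    rw [hF_def]
    refine lintegral_congr fun x => ?_
    rw [← ENNReal.ofReal_coe_nnreal, coe_nnnorm, ENNReal.ofReal_rpow_of_nonneg (norm_nonneg _) hp.le]
  set τ : ℤ → ℝ≥0∞ := fun j => ENNReal.ofReal (|a j| * b j ^ (-1 / p)) with hτ_def
  have hcoe : ∀ j : ℤ, ENNReal.ofReal |a j| = (‖a j‖₊ : ℝ≥0∞) := by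
    intro j; rw [← Real.norm_eq_abs, ← coe_nnnorm, ENNReal.ofReal_coe_nnreal]
  have hτcalc : ∀ j, τ j ^ p = (‖a j‖₊ : ℝ≥0∞) ^ p * (ENNReal.ofReal (b j))⁻¹ := by
    intro j
    have he : -1 / p * p = -1 := by field_simp
    simp only [hτ_def]
    rw [ENNReal.ofReal_mul (abs_nonneg _), ENNReal.mul_rpow_of_nonneg _ _ hp.le,
      hcoe j, ENNReal.ofReal_rpow_of_nonneg (Real.rpow_nonneg (hb j).le _) hp.le,
      ← Real.rpow_mul (hb j).le, he, Real.rpow_neg_one, ENNReal.ofReal_inv_of_pos (hb j)]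
  have hI : ∀ j, ∫⁻ x, n j x ^ p ∂μ = τ j ^ p * F := by
    intro j
    have hHmeas : Measurable fun y : (Fin m → ℝ) × ℝ => ((‖f y‖₊ : ℝ≥0∞)) ^ p :=
      hf.enorm.pow_const p
    have hsplit : ∀ x : (Fin m → ℝ) × ℝ,
        n j x ^ p = (‖a j‖₊ : ℝ≥0∞) ^ p * ((‖f (x.1, -(b j) * x.2)‖₊ : ℝ≥0∞)) ^ p := by
      intro x
      simp only [hn_def, nnnorm_smul, ENNReal.coe_mul]
      rw [ENNReal.mul_rpow_of_nonneg _ _ hp.le]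
    calc ∫⁻ x, n j x ^ p ∂μ
        = (‖a j‖₊ : ℝ≥0∞) ^ p
            * ∫⁻ x in {x : (Fin m → ℝ) × ℝ | x.2 < 0},
                ((‖f (x.1, -(b j) * x.2)‖₊ : ℝ≥0∞)) ^ p := by
          simp only [hsplit]
          exact lintegral_const_mul' _ _
            (ENNReal.rpow_ne_top_of_nonneg hp.le ENNReal.coe_ne_top)
      _ = (‖a j‖₊ : ℝ≥0∞) ^ p * ((ENNReal.ofReal (b j))⁻¹ * F) := by
          rw [aux_scaleP (hb j) _ hHmeas, ← hF_eq]
      _ = τ j ^ p * F := by rw [hτcalc j, mul_assoc]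
  have hτle : ∀ j : ℤ, τ j ≤ ENNReal.ofReal ((2:ℝ) ^ (-δ * |(j : ℝ)|) * A) := by
    intro j
    refine ENNReal.ofReal_le_ofReal ?_
    have h1 : (2:ℝ) ^ (δ * |(j : ℝ)|) * |a j| * b j ^ (-1 / p) ≤ A :=
      Summable.le_tsum hsum j fun i _ => hterm_nonneg i
    have h2 : (2:ℝ) ^ (-δ * |(j : ℝ)|) * ((2:ℝ) ^ (δ * |(j : ℝ)|)) = 1 := by
      rw [← Real.rpow_add two_pos]
      norm_num
    calc |a j| * b j ^ (-1 / p)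
        = (2:ℝ) ^ (-δ * |(j : ℝ)|) * ((2:ℝ) ^ (δ * |(j : ℝ)|) * |a j| * b j ^ (-1 / p)) := by
          rw [← mul_assoc, ← mul_assoc, h2, one_mul]
      _ ≤ (2:ℝ) ^ (-δ * |(j : ℝ)|) * A :=
          mul_le_mul_of_nonneg_left h1 (Real.rpow_nonneg (by norm_num) _)
  have hmain := hcore _ _ μ n hn τ F A hA0 hI hτle
  have hRfin : (ENNReal.ofReal C) ^ p * ((ENNReal.ofReal A) ^ p * F) < ⊤ := by
    refine ENNReal.mul_lt_top ?_ (ENNReal.mul_lt_top ?_ hfin)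
    · exact (ENNReal.rpow_ne_top_of_nonneg hp.le ENNReal.ofReal_ne_top).lt_top
    · exact (ENNReal.rpow_ne_top_of_nonneg hp.le ENNReal.ofReal_ne_top).lt_top
  have hfin2 : ∫⁻ x, (∑' j, n j x) ^ p ∂μ < ⊤ := lt_of_le_of_lt hmain hRfin
  have hS_meas : Measurable fun x => ∑' j, n j x := Measurable.ennreal_tsum hn
  have hae : ∀ᵐ x ∂μ, (∑' j, n j x) ^ p < ⊤ := ae_lt_top (hS_meas.pow_const p) hfin2.ne
  have hae2 : ∀ᵐ x ∂μ, Summable fun j : ℤ => ‖a j • f (x.1, -(b j) * x.2)‖ := by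
    filter_upwards [hae] with x hx
    have hfin3 : (∑' j, n j x) ≠ ⊤ := by
      intro h
      rw [h, ENNReal.top_rpow_of_pos hp] at hx
      exact (lt_irrefl _ hx)
    have hsumm : Summable fun j : ℤ => ‖a j • f (x.1, -(b j) * x.2)‖₊ :=
      ENNReal.tsum_coe_ne_top_iff_summable.mp hfin3
    simpa [← coe_nnnorm] using NNReal.summable_coe.mpr hsumm
  constructor
  · have := ae_imp_of_ae_restrict hae2
    filter_upwards [this] with x h hx
    exact h hx
  · have hptwise : ∀ᵐ x ∂μ,
        ENNReal.ofReal (‖∑' j : ℤ, a j • f (x.1, -(b j) * x.2)‖ ^ p) ≤ (∑' j, n j x) ^ p := by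
      filter_upwards [hae2] with x hx
      have h1 : ‖∑' j : ℤ, a j • f (x.1, -(b j) * x.2)‖
          ≤ ∑' j : ℤ, ‖a j • f (x.1, -(b j) * x.2)‖ := norm_tsum_le_tsum_norm hx
      have h2 : ENNReal.ofReal (‖∑' j : ℤ, a j • f (x.1, -(b j) * x.2)‖) ≤ ∑' j, n j x := by
        calc ENNReal.ofReal (‖∑' j : ℤ, a j • f (x.1, -(b j) * x.2)‖)
            ≤ ENNReal.ofReal (∑' j : ℤ, ‖a j • f (x.1, -(b j) * x.2)‖) :=
              ENNReal.ofReal_le_ofReal h1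
          _ = ∑' j, n j x := by
              rw [ENNReal.ofReal_tsum_of_nonneg (fun j => norm_nonneg _) hx]
              exact tsum_congr fun j => ofReal_norm _
      calc ENNReal.ofReal (‖∑' j : ℤ, a j • f (x.1, -(b j) * x.2)‖ ^ p)
          = (ENNReal.ofReal ‖∑' j : ℤ, a j • f (x.1, -(b j) * x.2)‖) ^ p :=
            (ENNReal.ofReal_rpow_of_nonneg (norm_nonneg _) hp.le).symm
        _ ≤ (∑' j, n j x) ^ p := ENNReal.rpow_le_rpow h2 hp.le
    calc (∫⁻ x in {x : (Fin m → ℝ) × ℝ | x.2 < 0},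
            ENNReal.ofReal (‖∑' j : ℤ, a j • f (x.1, -(b j) * x.2)‖ ^ p)) ^ (1 / p)
        ≤ ((ENNReal.ofReal C) ^ p * ((ENNReal.ofReal A) ^ p * F)) ^ (1 / p) :=
          ENNReal.rpow_le_rpow (le_trans (lintegral_mono_ae hptwise) hmain)
            (by positivity)
      _ = ENNReal.ofReal (C * A) * F ^ (1 / p) := by
          rw [ENNReal.mul_rpow_of_nonneg _ _ (by positivity),
            ENNReal.mul_rpow_of_nonneg _ _ (by positivity),
            ← ENNReal.rpow_mul, ← ENNReal.rpow_mul, mul_one_div_cancel hp.ne',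
            ENNReal.rpow_one, ENNReal.rpow_one, ← mul_assoc,
            ← ENNReal.ofReal_mul hC.le]
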